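/- arXiv:1812.04947 — 5 statements merged into one kernel-verified Lean document; each statement's English description precedes it below -/
import Mathlib

section
/- Let p : V × V → V be a skew-symmetric k-bilinear map. Then S(S([p,p])) = 2·S([p,p]) (i.e. the Hodge component e_3(3)[p,p] of the Gerstenhaber bracket [p,p] vanishes) if and only if p satisfies the Jacobi identity p(a,p(b,c)) + p(b,p(c,a)) + p(c,p(a,b)) = 0 for all a,b,c ∈ V. -/
/-- A map `f : V → V → V` is `k`-bilinear. -/
def IsBilin (k : Type*) [Field k] {V : Type*} [AddCommGroup V] [Module k V]
    (f : V → V → V) : Prop :=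
  (∀ a b c, f (a + b) c = f a c + f b c) ∧ (∀ (r : k) (a b), f (r • a) b = r • f a b) ∧
  (∀ a b c, f a (b + c) = f a b + f a c) ∧ (∀ (r : k) (a b), f a (r • b) = r • f a b)

/-- Gerstenhaber composition of two bilinear maps:
`(f ∘ g)(a,b,c) = f(g(a,b),c) − f(a,g(b,c))`. -/
def gcirc {V : Type*} [AddCommGroup V] (f g : V → V → V) : V → V → V → V :=
  fun a b c => f (g a b) c - f a (g b c)

/-- Gerstenhaber bracket `[f,g] = f∘g + g∘f` of two bilinear maps. -/
def gbr {V : Type*} [AddCommGroup V] (f g : V → V → V) : V → V → V → V :=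
  fun a b c => gcirc f g a b c + gcirc g f a b c

/-- The shuffle operator `S` on trilinear maps:
`(S F)(a,b,c) = 2F(a,b,c) − F(b,a,c) − F(a,c,b) + F(b,c,a) + F(c,a,b)`. -/
def Shuf {V : Type*} [AddCommGroup V] (F : V → V → V → V) : V → V → V → V :=
  fun a b c => F a b c + F a b c - F b a c - F a c b + F b c a + F c a b

theorem key_aux {V : Type*} [AddCommGroup V]
    (p : V → V → V) (hskew : ∀ a b, p a b = - p b a)
    (hneg1 : ∀ x y : V, p (-x) y = - p x y)
    (hneg2 : ∀ x y : V, p x (-y) = - p x y) (a b c : V) :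
    Shuf (Shuf (gbr p p)) a b c - 2 • Shuf (gbr p p) a b c
      = (-32 : ℤ) • (p a (p b c) + p b (p c a) + p c (p a b)) := by
  have s1 : ∀ x y z : V, p (p x y) z = -(p z (p x y)) := fun x y z => hskew _ _
  have i1 : p b a = - p a b := hskew b a
  have i2 : p c a = - p a c := hskew c a
  have i3 : p c b = - p b c := hskew c b
  simp only [Shuf, gbr, gcirc, s1, i1, i2, i3, hneg1, hneg2, neg_neg]
  abel

/-- For a skew-symmetric bilinear map `p`, the Hodge component `e₃(3)[p,p]` of the
Gerstenhaber bracket `[p,p]` vanishes (i.e. `S(S([p,p])) = 2·S([p,p])`) if and only if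
`p` satisfies the Jacobi identity. -/
theorem stmt0 {k : Type*} [Field k] [CharZero k] {V : Type*} [AddCommGroup V] [Module k V]
    (p : V → V → V) (hbil : IsBilin k p) (hskew : ∀ a b, p a b = - p b a) :
    Shuf (Shuf (gbr p p)) = 2 • Shuf (gbr p p) ↔
      ∀ a b c, p a (p b c) + p b (p c a) + p c (p a b) = 0 := by
  obtain ⟨hadd1, -, hadd2, -⟩ := hbil
  have hz1 : ∀ x : V, p 0 x = 0 := by
    intro x
    have h : p 0 x + p 0 x = p 0 x + 0 := by rw [add_zero, ← hadd1, add_zero]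
    exact add_left_cancel h
  have hz2 : ∀ x : V, p x 0 = 0 := by
    intro x
    have h : p x 0 + p x 0 = p x 0 + 0 := by rw [add_zero, ← hadd2, add_zero]
    exact add_left_cancel h
  have hneg1 : ∀ x y : V, p (-x) y = - p x y := by
    intro x y
    have h : p x y + p (-x) y = 0 := by rw [← hadd1, add_neg_cancel, hz1]
    exact (neg_eq_of_add_eq_zero_right h).symm
  have hneg2 : ∀ x y : V, p x (-y) = - p x y := by
    intro x y
    have h : p x y + p x (-y) = 0 := by rw [← hadd2, add_neg_cancel, hz2]
    exact (neg_eq_of_add_eq_zero_right h).symm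
  constructor
  · intro h a b c
    have hpt : Shuf (Shuf (gbr p p)) a b c = 2 • Shuf (gbr p p) a b c := by
      have := congrFun (congrFun (congrFun h a) b) c
      simpa using this
    have h0 : (-32 : ℤ) • (p a (p b c) + p b (p c a) + p c (p a b)) = 0 := by
      rw [← key_aux p hskew hneg1 hneg2 a b c, hpt, sub_self]
    have h0' : ((-32 : ℤ) : k) • (p a (p b c) + p b (p c a) + p c (p a b)) = 0 := by
      rw [Int.cast_smul_eq_zsmul]; exact h0
    rcases smul_eq_zero.mp h0' with h | h
    · exfalso
      have : ((-32 : ℤ) : k) ≠ 0 := by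
        exact_mod_cast (by norm_num : (-32 : ℤ) ≠ 0)
      exact this h
    · exact h
  · intro hJ
    funext a b c
    have hk := key_aux p hskew hneg1 hneg2 a b c
    rw [hJ a b c, smul_zero, sub_eq_zero] at hk
    simpa using hk
end

section
/- Let p : V × V → V be a skew-symmetric k-bilinear map and q : V × V → V a symmetric k-bilinear map. Then the Gerstenhaber bracket [p,q] satisfies S([p,q]) = 2·[p,q], i.e. [p,q] lies entirely in the 2-eigenspace of the shuffle operator (so [p,q] = e_3(2)[p,q]). -/
/-- For `p` skew-symmetric bilinear and `q` symmetric bilinear, the Gerstenhaber bracket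
`[p,q]` satisfies `S([p,q]) = 2·[p,q]`, i.e. it lies in the 2-eigenspace of the shuffle
operator (so `[p,q] = e₃(2)[p,q]`). -/
theorem stmt2 {k : Type*} [Field k] [CharZero k] {V : Type*} [AddCommGroup V] [Module k V]
    (p q : V → V → V) (hpbil : IsBilin k p) (hqbil : IsBilin k q)
    (hpskew : ∀ a b, p a b = - p b a) (hqsymm : ∀ a b, q a b = q b a) :
    Shuf (gbr p q) = 2 • gbr p q := by
  have pneg1 : ∀ a b, p (-a) b = - p a b := by
    intro a b; rw [← neg_one_smul k a, hpbil.2.1, neg_one_smul]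
  have pneg2 : ∀ a b, p a (-b) = - p a b := by
    intro a b; rw [← neg_one_smul k b, hpbil.2.2.2, neg_one_smul]
  have qneg1 : ∀ a b, q (-a) b = - q a b := by
    intro a b; rw [← neg_one_smul k a, hqbil.2.1, neg_one_smul]
  have qneg2 : ∀ a b, q a (-b) = - q a b := by
    intro a b; rw [← neg_one_smul k b, hqbil.2.2.2, neg_one_smul]
  have L : ∀ x y z, gbr p q y x z + gbr p q x z y = gbr p q y z x + gbr p q z x y := by
    intro x y z
    simp only [gbr, gcirc, hqsymm y x, hqsymm z y, hqsymm z x, hpskew y x, hpskew z x,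
      hpskew z y, pneg1, pneg2, qneg1, qneg2, hpskew y (q x z), hpskew x (q y z),
      hpskew z (q x y), hqsymm y (p x z), hqsymm x (p y z), hqsymm z (p x y), neg_neg]
    abel
  funext a b c
  show Shuf (gbr p q) a b c = 2 • gbr p q a b c
  have key :
      gbr p q a b c + gbr p q a b c - gbr p q b a c - gbr p q a c b + gbr p q b c a
        + gbr p q c a b
      = gbr p q a b c + gbr p q a b c - (gbr p q b a c + gbr p q a c b)
        + (gbr p q b c a + gbr p q c a b) := by abel
  rw [Shuf, key, L a b c, two_smul]
  abel
end

section
/- Let q : V × V → V be a symmetric k-bilinear map. Then the Gerstenhaber bracket [q,q] satisfies S([q,q]) = 0, i.e. [q,q] lies entirely in the 0-eigenspace (Harrison part) of the shuffle operator (so [q,q] = e_3(1)[q,q]). -/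
/-- For a symmetric bilinear map `q`, the Gerstenhaber bracket `[q,q]` satisfies
`S([q,q]) = 0`, i.e. `[q,q]` lies in the 0-eigenspace (Harrison part) of the shuffle
operator (so `[q,q] = e₃(1)[q,q]`). -/
theorem stmt3 {k : Type*} [Field k] [CharZero k] {V : Type*} [AddCommGroup V] [Module k V]
    (q : V → V → V) (hqbil : IsBilin k q) (hqsymm : ∀ a b, q a b = q b a) :
    Shuf (gbr q q) = 0 := by
  funext a b c
  simp only [Shuf, gbr, gcirc, Pi.zero_apply]
  rw [hqsymm (q a b) c, hqsymm (q b a) c, hqsymm (q a c) b, hqsymm (q b c) a,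
      hqsymm (q c a) b, hqsymm b a, hqsymm c b, hqsymm c a]
  abel
end

section
/- Let μ : V × V → V be a symmetric k-bilinear map and μ_p : V × V → V a skew-symmetric k-bilinear map. Then (V, μ, μ_p) is a Poisson algebra — i.e. μ is associative (μ(μ(a,b),c) = μ(a,μ(b,c))), μ_p satisfies the Leibniz rule μ_p(a,μ(b,c)) = μ(μ_p(a,b),c) + μ(μ_p(a,c),b), and μ_p satisfies the Jacobi identity μ_p(a,μ_p(b,c)) + μ_p(b,μ_p(c,a)) + μ_p(c,μ_p(a,b)) = 0 — if and only if [μ,μ] = 0, [μ,μ_p] = 0 and S(S([μ_p,μ_p])) = 2·S([μ_p,μ_p]) (the last condition being e_3(3)[μ_p,μ_p] = 0). -/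
/-- For `μ` symmetric bilinear and `μ_p` skew-symmetric bilinear, `(V,μ,μ_p)` is a
Poisson algebra (associativity, Leibniz rule, Jacobi identity) iff `[μ,μ] = 0`,
`[μ,μ_p] = 0` and `S(S([μ_p,μ_p])) = 2·S([μ_p,μ_p])` (i.e. `e₃(3)[μ_p,μ_p] = 0`). -/
theorem stmt7 {k : Type*} [Field k] [CharZero k] {V : Type*} [AddCommGroup V] [Module k V]
    (μ μp : V → V → V) (hμbil : IsBilin k μ) (hμpbil : IsBilin k μp)
    (hμsymm : ∀ a b, μ a b = μ b a) (hμpskew : ∀ a b, μp a b = - μp b a) :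
    ((∀ a b c, μ (μ a b) c = μ a (μ b c)) ∧
     (∀ a b c, μp a (μ b c) = μ (μp a b) c + μ (μp a c) b) ∧
     (∀ a b c, μp a (μp b c) + μp b (μp c a) + μp c (μp a b) = 0)) ↔
    (gbr μ μ = 0 ∧ gbr μ μp = 0 ∧
      Shuf (Shuf (gbr μp μp)) = 2 • Shuf (gbr μp μp)) := by
  obtain ⟨hμa1, hμs1, hμa2, hμs2⟩ := hμbil
  obtain ⟨hpa1, hps1, hpa2, hps2⟩ := hμpbil
  have hμnl : ∀ a b : V, μ (-a) b = - μ a b := fun a b => by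
    simpa using hμs1 (-1 : k) a b
  have hμnr : ∀ a b : V, μ a (-b) = - μ a b := fun a b => by
    simpa using hμs2 (-1 : k) a b
  have hpnl : ∀ a b : V, μp (-a) b = - μp a b := fun a b => by
    simpa using hps1 (-1 : k) a b
  have hpnr : ∀ a b : V, μp a (-b) = - μp a b := fun a b => by
    simpa using hps2 (-1 : k) a b
  have cancel : ∀ (c : k), c ≠ 0 → ∀ v : V, c • v = 0 → v = 0 := fun c hc v hv => by
    have := congrArg (fun w : V => c⁻¹ • w) hv
    simpa [smul_smul, inv_mul_cancel₀ hc] using this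
  have cancel2 : ∀ d : V, d + d = 0 → d = 0 := fun d hd =>
    cancel 2 two_ne_zero d (by rw [two_smul]; exact hd)
  have houter : ∀ x y z : V, μp (μp x y) z = - μp z (μp x y) := fun x y z => hμpskew _ _
  have hSG : ∀ a b c : V, Shuf (gbr μp μp) a b c
      = (-8 : ℤ) • (μp a (μp b c) + μp b (μp c a) + μp c (μp a b)) := by
    intro a b c
    simp only [Shuf, gbr, gcirc]
    simp only [houter, hμpskew c b, hμpskew a c, hμpskew b a, hpnl, hpnr]
    abel
  have hJ1 : ∀ x y z : V, μp y (μp x z) + μp x (μp z y) + μp z (μp y x)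
      = -(μp x (μp y z) + μp y (μp z x) + μp z (μp x y)) := by
    intro x y z
    simp only [hμpskew x z, hμpskew z y, hμpskew y x, hpnr]
    abel
  have hJ2 : ∀ x y z : V, μp x (μp z y) + μp z (μp y x) + μp y (μp x z)
      = -(μp x (μp y z) + μp y (μp z x) + μp z (μp x y)) := by
    intro x y z
    simp only [hμpskew x z, hμpskew z y, hμpskew y x, hpnr]
    abel
  have hJ3 : ∀ x y z : V, μp y (μp z x) + μp z (μp x y) + μp x (μp y z)
      = μp x (μp y z) + μp y (μp z x) + μp z (μp x y) := fun x y z => by abel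
  have hJ4 : ∀ x y z : V, μp z (μp x y) + μp x (μp y z) + μp y (μp z x)
      = μp x (μp y z) + μp y (μp z x) + μp z (μp x y) := fun x y z => by abel
  have hSGfun : Shuf (gbr μp μp)
      = fun x y z => (-8 : ℤ) • (μp x (μp y z) + μp y (μp z x) + μp z (μp x y)) :=
    funext fun x => funext fun y => funext fun z => hSG x y z
  have hSSG : ∀ a b c : V, Shuf (Shuf (gbr μp μp)) a b c
      = (-48 : ℤ) • (μp a (μp b c) + μp b (μp c a) + μp c (μp a b)) := by
    intro a b c
    rw [hSGfun]
    simp only [Shuf]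
    rw [hJ1 a b c, hJ2 a b c, hJ3 a b c, hJ4 a b c]
    abel
  constructor
  · rintro ⟨hassoc, hleib, hjac⟩
    refine ⟨?_, ?_, ?_⟩
    · funext a b c
      simp [gbr, gcirc, hassoc a b c]
    · funext a b c
      simp only [gbr, gcirc, Pi.zero_apply]
      rw [hμpskew (μ a b) c, hleib c a b, hleib a b c, hμsymm a (μp b c)]
      simp only [hμpskew c a, hμpskew c b, hμnl]
      abel
    · have hG0 : Shuf (gbr μp μp) = 0 := by
        funext a b c
        rw [hSG a b c, hjac a b c, smul_zero]
        rfl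
      rw [hG0]
      funext a b c
      simp [Shuf]
  · rintro ⟨h1, h2, h3⟩
    refine ⟨?_, ?_, ?_⟩
    · intro a b c
      have h := congrFun (congrFun (congrFun h1 a) b) c
      simp only [gbr, gcirc, Pi.zero_apply] at h
      have hd := cancel2 _ h
      exact sub_eq_zero.mp hd
    · have key : ∀ a b c : V,
          (μp a (μ b c) - (μ (μp a b) c + μ (μp a c) b))
            + (μp c (μ a b) - (μ (μp c a) b + μ (μp c b) a))
          = -(gbr μ μp a b c) := by
        intro a b c
        simp only [gbr, gcirc]
        rw [hμpskew (μ a b) c, hμsymm a (μp b c)]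
        simp only [hμpskew c a, hμpskew c b, hμnl]
        abel
      have hrel : ∀ a b c : V,
          (μp a (μ b c) - (μ (μp a b) c + μ (μp a c) b))
            = -(μp c (μ a b) - (μ (μp c a) b + μ (μp c b) a)) := by
        intro a b c
        have hk := key a b c
        rw [h2] at hk
        simp only [Pi.zero_apply, neg_zero] at hk
        exact eq_neg_of_add_eq_zero_left hk
      intro a b c
      have e1 := hrel a b c
      have e2 := hrel c a b
      have e3 := hrel b c a
      have hL : (μp a (μ b c) - (μ (μp a b) c + μ (μp a c) b)) = 0 := by
        apply cancel2
        nth_rewrite 2 [e1]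
        rw [e2, e3]
        abel
      exact sub_eq_zero.mp hL
    · intro a b c
      have h := congrFun (congrFun (congrFun h3 a) b) c
      rw [hSSG a b c] at h
      rw [Pi.smul_apply, Pi.smul_apply, Pi.smul_apply, hSG a b c] at h
      set S := μp a (μp b c) + μp b (μp c a) + μp c (μp a b) with hS
      have h32 : (32 : ℤ) • S = 0 := by
        have h' : (-16 : ℤ) • S - (-48 : ℤ) • S = 0 := by rw [h]; abel
        calc (32 : ℤ) • S = (-16 : ℤ) • S - (-48 : ℤ) • S := by abel
          _ = 0 := h'
      have h32k : (32 : k) • S = 0 := by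
        rw [show (32 : k) = ((32 : ℤ) : k) by norm_num, Int.cast_smul_eq_zsmul]
        exact h32
      exact cancel 32 (by norm_num) S h32k
end

section
/- Let σ ⊆ ℝ³ be the cone over a convex lattice polygon P with vertices v_1,…,v_N (a_j = (v_j,1)), Λ = σ^∨ ∩ ℤ³, and fix an integer q ≥ 2. For each j set K_j := {r ∈ Λ : ⟨a_j, r⟩ < q} ∩ {r ∈ Λ : ⟨a_{j+1}, r⟩ < q} and U_j := span_ℚ(K_j) ⊆ ℚ³. Then: (i) U_j = ℚ³ if ℓ(j) < q, while U_j = {c ∈ ℚ³ : ⟨c, a_j⟩ = ⟨c, a_{j+1}⟩} if ℓ(j) ≥ q; and (ii) letting J := {j : ℓ(j) ≥ q}, the intersection ∩_{j=1}^N U_j has ℚ-dimension 3 if J = ∅; dimension 2 if J consists of exactly one element, or of exactly two elements j_1 ≠ j_2 with d_{j_1} and d_{j_2} parallel (ℚ-linearly dependent); and dimension 1 in all other cases. -/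
noncomputable section Polygon

/-- `2×2` determinant `det(u,w) = u₁w₂ − u₂w₁`. -/
def detz (u w : ℤ × ℤ) : ℤ := u.1 * w.2 - u.2 * w.1

/-- `a_j := (v_j, 1) ∈ ℤ³`, the primitive generator over the vertex `v_j`. -/
def avec {N : ℕ} (v : Fin N → ℤ × ℤ) (j : Fin N) : ℤ × ℤ × ℤ := ((v j).1, (v j).2, 1)

/-- The pairing `⟨a,r⟩` on `ℤ³`. -/
def dot3 (a r : ℤ × ℤ × ℤ) : ℤ := a.1 * r.1 + a.2.1 * r.2.1 + a.2.2 * r.2.2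

/-- `v₁,…,v_N` are the vertices, in cyclic order, of a convex lattice polygon. -/
def IsConvexCycle {N : ℕ} [NeZero N] (v : Fin N → ℤ × ℤ) : Prop :=
  ∀ j l : Fin N, l ≠ j → l ≠ j + 1 → 0 < detz (v (j + 1) - v j) (v l - v j)

/-- The lattice length `ℓ(j)` of the edge `d_j = a_{j+1} − a_j`: the largest positive
integer `m` with `d_j/m ∈ ℤ³`, i.e. the gcd of the coordinates of `v_{j+1} − v_j`. -/
def latlen {N : ℕ} [NeZero N] (v : Fin N → ℤ × ℤ) (j : Fin N) : ℕ :=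
  Int.gcd ((v (j + 1) - v j).1) ((v (j + 1) - v j).2)

/-- The inclusion `ℤ³ → ℚ³`. -/
def castQ (r : ℤ × ℤ × ℤ) : ℚ × ℚ × ℚ := ((r.1 : ℚ), (r.2.1 : ℚ), (r.2.2 : ℚ))

/-- The pairing of `c ∈ ℚ³` with `a ∈ ℤ³`. -/
def dotQ (c : ℚ × ℚ × ℚ) (a : ℤ × ℤ × ℤ) : ℚ :=
  c.1 * (a.1 : ℚ) + c.2.1 * (a.2.1 : ℚ) + c.2.2 * (a.2.2 : ℚ)

/-- `K_j = {r ∈ Λ : ⟨a_j,r⟩ < q and ⟨a_{j+1},r⟩ < q}`, where `Λ = σ^∨ ∩ ℤ³`. -/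
def Kset {N : ℕ} [NeZero N] (v : Fin N → ℤ × ℤ) (q : ℤ) (j : Fin N) :
    Set (ℤ × ℤ × ℤ) :=
  {r | (∀ l : Fin N, 0 ≤ dot3 (avec v l) r) ∧
    dot3 (avec v j) r < q ∧ dot3 (avec v (j + 1)) r < q}

/-- `U_j = span_ℚ(K_j) ⊆ ℚ³`. -/
def Usub {N : ℕ} [NeZero N] (v : Fin N → ℤ × ℤ) (q : ℤ) (j : Fin N) :
    Submodule ℚ (ℚ × ℚ × ℚ) :=
  Submodule.span ℚ (castQ '' Kset v q j)

namespace StmtAux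
variable {N : ℕ} [NeZero N] {v : Fin N → ℤ × ℤ} {q : ℤ}

/-- edge vector -/
def Dv (v : Fin N → ℤ × ℤ) (j : Fin N) : ℤ × ℤ := v (j + 1) - v j

/-- linear functional c ↦ c·(D,0) -/
def fD (v : Fin N → ℤ × ℤ) (j : Fin N) : (ℚ × ℚ × ℚ) →ₗ[ℚ] ℚ where
  toFun c := c.1 * ((Dv v j).1 : ℚ) + c.2.1 * ((Dv v j).2 : ℚ)
  map_add' a b := by simp; ring
  map_smul' m a := by simp; ring

def e3 : ℚ × ℚ × ℚ := (0, 0, 1)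

def r1 (v : Fin N → ℤ × ℤ) (j : Fin N) : ℤ × ℤ × ℤ :=
  (-(Dv v j).2, (Dv v j).1, (Dv v j).2 * (v j).1 - (Dv v j).1 * (v j).2)

lemma dot3_r1 (v : Fin N → ℤ × ℤ) (j l : Fin N) :
    dot3 (avec v l) (r1 v j) = detz (Dv v j) (v l - v j) := by
  simp [dot3, avec, r1, detz, Dv]; ring

lemma fin_j2_ne (hN : 3 ≤ N) (j : Fin N) : j + 2 ≠ j := by
  intro h
  have h1 : (2 : Fin N) = 0 := by
    have : j + (2 : Fin N) = j + 0 := by simpa using h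
    exact add_left_cancel this
  have h2 : (2 : ℕ) % N = 0 := congrArg Fin.val h1
  rw [Nat.mod_eq_of_lt (by omega)] at h2
  omega

lemma fin_j2_ne' (hN : 3 ≤ N) (j : Fin N) : j + 2 ≠ j + 1 := by
  intro h
  have h1 : (2 : Fin N) = 1 := add_left_cancel h
  have h2 : (2 : ℕ) % N = 1 % N := congrArg Fin.val h1
  rw [Nat.mod_eq_of_lt (by omega : 2 < N), Nat.mod_eq_of_lt (by omega : 1 < N)] at h2
  omega

lemma Dv_pos (hconv : IsConvexCycle v) (hN : 3 ≤ N) (j : Fin N) :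
    0 < detz (Dv v j) (v (j + 2) - v j) :=
  hconv j (j + 2) (fin_j2_ne hN j) (fin_j2_ne' hN j)

lemma Dv_ne (hconv : IsConvexCycle v) (hN : 3 ≤ N) (j : Fin N) : Dv v j ≠ 0 := by
  intro h
  have := Dv_pos (v := v) hconv hN j
  rw [h] at this
  simp [detz] at this

lemma Dv_normsq_pos (hconv : IsConvexCycle v) (hN : 3 ≤ N) (j : Fin N) :
    0 < (Dv v j).1 ^ 2 + (Dv v j).2 ^ 2 := by
  rcases lt_or_eq_of_le (by positivity : (0:ℤ) ≤ (Dv v j).1 ^ 2 + (Dv v j).2 ^ 2) with h | h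
  · exact h
  · exfalso
    apply Dv_ne hconv hN j
    have h1 : (Dv v j).1 = 0 := by nlinarith [sq_nonneg (Dv v j).1, sq_nonneg (Dv v j).2]
    have h2 : (Dv v j).2 = 0 := by nlinarith [sq_nonneg (Dv v j).1, sq_nonneg (Dv v j).2]
    exact Prod.ext h1 h2

lemma latlen_pos (hconv : IsConvexCycle v) (hN : 3 ≤ N) (j : Fin N) :
    0 < latlen v j := by
  rw [latlen, Int.gcd_pos_iff]
  have hne := Dv_ne hconv hN j
  by_cases h : (v (j+1) - v j).1 = 0
  · refine Or.inr fun h2 => hne ?_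
    rw [Dv]
    exact Prod.ext h h2
  · exact Or.inl h

lemma r0_mem (hq : 2 ≤ q) (j : Fin N) : ((0,0,1) : ℤ×ℤ×ℤ) ∈ Kset v q j := by
  have h : ∀ l : Fin N, dot3 (avec v l) ((0,0,1) : ℤ×ℤ×ℤ) = 1 := by
    intro l; simp [dot3, avec]
  exact ⟨fun l => by rw [h]; norm_num, by rw [h]; omega, by rw [h]; omega⟩

lemma r1_mem (hconv : IsConvexCycle v) (hq : 2 ≤ q) (j : Fin N) :
    r1 v j ∈ Kset v q j := by
  have h0 : dot3 (avec v j) (r1 v j) = 0 := by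
    rw [dot3_r1]; simp [detz]
  have h1 : dot3 (avec v (j+1)) (r1 v j) = 0 := by
    rw [dot3_r1]; simp [detz, Dv]; ring
  refine ⟨fun l => ?_, by omega, by omega⟩
  by_cases hl : l = j
  · subst hl; omega
  by_cases hl' : l = j + 1
  · subst hl'; omega
  rw [dot3_r1]
  exact (hconv j l hl hl').le

lemma fD_castQ (j : Fin N) (r : ℤ×ℤ×ℤ) :
    fD v j (castQ r) = (((Dv v j).1 * r.1 + (Dv v j).2 * r.2.1 : ℤ) : ℚ) := by
  simp [fD, castQ]
  push_cast
  ring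

lemma K_dot_eq {j : Fin N} (hql : q ≤ (latlen v j : ℤ)) {r : ℤ×ℤ×ℤ}
    (hr : r ∈ Kset v q j) : dot3 (avec v (j+1)) r = dot3 (avec v j) r := by
  obtain ⟨hpos, hjq, hj1q⟩ := hr
  have hpj := hpos j
  have hpj1 := hpos (j+1)
  set t : ℤ := (Dv v j).1 * r.1 + (Dv v j).2 * r.2.1 with ht
  have hdiff : dot3 (avec v (j+1)) r = dot3 (avec v j) r + t := by
    simp [dot3, avec, Dv, ht]; ring
  have hdvd : ((latlen v j : ℤ)) ∣ t :=
    dvd_add (Dvd.dvd.mul_right (Int.gcd_dvd_left _ _) _)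
      (Dvd.dvd.mul_right (Int.gcd_dvd_right _ _) _)
  rcases lt_trichotomy t 0 with h | h | h
  · have : (latlen v j : ℤ) ≤ -t := Int.le_of_dvd (by omega) (dvd_neg.mpr hdvd)
    omega
  · omega
  · have : (latlen v j : ℤ) ≤ t := Int.le_of_dvd h hdvd
    omega

lemma mem_span_pair_aux (d1 d2 z : ℚ) (hd : d1 ≠ 0 ∨ d2 ≠ 0) (c : ℚ×ℚ×ℚ)
    (hc : c.1 * d1 + c.2.1 * d2 = 0) :
    c ∈ Submodule.span ℚ {((-d2, d1, z) : ℚ×ℚ×ℚ), ((0,0,1) : ℚ×ℚ×ℚ)} := by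
  rw [Submodule.mem_span_pair]
  rcases hd with h | h
  · refine ⟨c.2.1 / d1, c.2.2 - c.2.1 / d1 * z, ?_⟩
    rw [Prod.ext_iff, Prod.ext_iff]
    refine ⟨?_, ?_, ?_⟩ <;> simp <;> field_simp <;> linarith
  · refine ⟨-c.1 / d2, c.2.2 + c.1 / d2 * z, ?_⟩
    rw [Prod.ext_iff, Prod.ext_iff]
    refine ⟨?_, ?_, ?_⟩ <;> simp <;> field_simp <;> linarith

lemma castQ_r1 (j : Fin N) :
    castQ (r1 v j) = (-(((Dv v j).2 : ℚ)), ((Dv v j).1 : ℚ),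
      (((Dv v j).2 * (v j).1 - (Dv v j).1 * (v j).2 : ℤ) : ℚ)) := by
  simp [castQ, r1]

lemma Dv_cast_ne (hconv : IsConvexCycle v) (hN : 3 ≤ N) (j : Fin N) :
    ((Dv v j).1 : ℚ) ≠ 0 ∨ ((Dv v j).2 : ℚ) ≠ 0 := by
  have := Dv_ne hconv hN j
  by_cases h : (Dv v j).1 = 0
  · refine Or.inr fun h2 => this (Prod.ext h (by exact_mod_cast h2))
  · exact Or.inl (by exact_mod_cast h)

lemma ker_le_span (hconv : IsConvexCycle v) (hN : 3 ≤ N) (j : Fin N) :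
    LinearMap.ker (fD v j) ≤ Submodule.span ℚ {castQ (r1 v j), e3} := by
  intro c hc
  rw [LinearMap.mem_ker] at hc
  have hc' : c.1 * ((Dv v j).1 : ℚ) + c.2.1 * ((Dv v j).2 : ℚ) = 0 := hc
  rw [castQ_r1]
  exact mem_span_pair_aux _ _ _ (Dv_cast_ne hconv hN j) c hc'

lemma castQ_e3 : castQ ((0,0,1) : ℤ×ℤ×ℤ) = e3 := by
  simp [castQ, e3]

lemma span_pair_le_Usub (hconv : IsConvexCycle v) (hq : 2 ≤ q) (j : Fin N) :
    Submodule.span ℚ {castQ (r1 v j), e3} ≤ Usub v q j := by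
  rw [Submodule.span_le]
  rintro x hx
  rcases hx with rfl | rfl
  · exact Submodule.subset_span ⟨r1 v j, r1_mem hconv hq j, rfl⟩
  · exact Submodule.subset_span ⟨(0,0,1), r0_mem hq j, castQ_e3⟩

lemma e3_mem_Usub (hq : 2 ≤ q) (j : Fin N) : e3 ∈ Usub v q j :=
  Submodule.subset_span ⟨(0,0,1), r0_mem hq j, castQ_e3⟩

lemma Usub_eq_ker (hconv : IsConvexCycle v) (hN : 3 ≤ N) (hq : 2 ≤ q) {j : Fin N}
    (hql : q ≤ (latlen v j : ℤ)) : Usub v q j = LinearMap.ker (fD v j) := by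
  apply le_antisymm
  · rw [Usub, Submodule.span_le]
    rintro _ ⟨r, hr, rfl⟩
    rw [SetLike.mem_coe, LinearMap.mem_ker, fD_castQ]
    have heq := K_dot_eq hql hr
    have hdiff : dot3 (avec v (j+1)) r = dot3 (avec v j) r
        + ((Dv v j).1 * r.1 + (Dv v j).2 * r.2.1) := by
      simp [dot3, avec, Dv]; ring
    have : (Dv v j).1 * r.1 + (Dv v j).2 * r.2.1 = 0 := by omega
    rw [this]; norm_num
  · exact le_trans (ker_le_span hconv hN j) (span_pair_le_Usub hconv hq j)

lemma fD_dotQ (j : Fin N) (c : ℚ × ℚ × ℚ) :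
    dotQ c (avec v (j+1)) - dotQ c (avec v j) = fD v j c := by
  simp [dotQ, avec, fD, Dv]
  push_cast
  ring

lemma Usub_mem_iff (hconv : IsConvexCycle v) (hN : 3 ≤ N) (hq : 2 ≤ q) {j : Fin N}
    (hql : q ≤ (latlen v j : ℤ)) (c : ℚ × ℚ × ℚ) :
    c ∈ Usub v q j ↔ dotQ c (avec v j) = dotQ c (avec v (j + 1)) := by
  rw [Usub_eq_ker hconv hN hq hql, LinearMap.mem_ker]
  have := fD_dotQ (v := v) j c
  constructor <;> intro h <;> linarith

lemma Usub_eq_top (hconv : IsConvexCycle v) (hN : 3 ≤ N) (hq : 2 ≤ q) {j : Fin N}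
    (hql : (latlen v j : ℤ) < q) : Usub v q j = ⊤ := by
  classical
  set D := Dv v j with hD
  set a : ℤ := Int.gcdA D.1 D.2 with ha
  set b : ℤ := Int.gcdB D.1 D.2 with hb
  have hbez : (latlen v j : ℤ) = D.1 * a + D.2 * b := Int.gcd_eq_gcd_ab D.1 D.2
  set M : ℕ := Finset.univ.sup
    (fun l : Fin N => (a * ((v j).1 - (v l).1) + b * ((v j).2 - (v l).2)).toNat) with hM
  set r : ℤ×ℤ×ℤ := (a - M * D.2, b + M * D.1,
    -((a - M*D.2) * (v j).1 + (b + M*D.1) * (v j).2)) with hr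
  have hdot : ∀ l, dot3 (avec v l) r =
      a * ((v l).1 - (v j).1) + b * ((v l).2 - (v j).2) + M * detz D (v l - v j) := by
    intro l; simp [dot3, avec, detz, hr]; ring
  have hj0 : dot3 (avec v j) r = 0 := by
    rw [hdot]; simp [detz]
  have hj1 : dot3 (avec v (j+1)) r = (latlen v j : ℤ) := by
    rw [hdot, hbez]; simp [hD, Dv, detz]; ring
  have hpos : ∀ l, 0 ≤ dot3 (avec v l) r := by
    intro l
    by_cases hl : l = j
    · subst hl; omega
    by_cases hl' : l = j + 1
    · subst hl'; rw [hj1]; positivity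
    have hdet : 1 ≤ detz D (v l - v j) := hconv j l hl hl'
    have hMl : a * ((v j).1 - (v l).1) + b * ((v j).2 - (v l).2) ≤ (M : ℤ) := by
      refine le_trans (Int.self_le_toNat _) ?_
      have : (a * ((v j).1 - (v l).1) + b * ((v j).2 - (v l).2)).toNat ≤ M := by
        rw [hM]
        exact Finset.le_sup (f := fun l : Fin N =>
          (a * ((v j).1 - (v l).1) + b * ((v j).2 - (v l).2)).toNat) (Finset.mem_univ l)
      exact_mod_cast this
    rw [hdot]
    have hM0 : (0:ℤ) ≤ (M:ℤ) := by positivity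
    nlinarith
  have hrK : r ∈ Kset v q j :=
    ⟨hpos, by omega, by rw [hj1]; exact hql⟩
  have hfr : fD v j (castQ r) = ((latlen v j : ℤ) : ℚ) := by
    rw [fD_castQ]
    have : (Dv v j).1 * r.1 + (Dv v j).2 * r.2.1 = (latlen v j : ℤ) := by
      rw [hbez, hr]; simp [hD]; ring
    rw [this]
  have hg0 : ((latlen v j : ℤ) : ℚ) ≠ 0 := by
    have := latlen_pos hconv hN j
    positivity
  rw [eq_top_iff]
  intro c _
  have hker : c - (fD v j c / ((latlen v j : ℤ) : ℚ)) • castQ r ∈ LinearMap.ker (fD v j) := by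
    rw [LinearMap.mem_ker, map_sub, map_smul, hfr, smul_eq_mul,
      div_mul_cancel₀ _ hg0, sub_self]
  have h1 : c - (fD v j c / ((latlen v j : ℤ) : ℚ)) • castQ r ∈ Usub v q j :=
    le_trans (ker_le_span hconv hN j) (span_pair_le_Usub hconv hq j) hker
  have h2 : (fD v j c / ((latlen v j : ℤ) : ℚ)) • castQ r ∈ Usub v q j :=
    Submodule.smul_mem _ _ (Submodule.subset_span ⟨r, hrK, rfl⟩)
  have := Submodule.add_mem _ h1 h2
  simpa using this

def dotp (u w : ℤ × ℤ) : ℤ := u.1 * w.1 + u.2 * w.2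

lemma adj_det_pos (hconv : IsConvexCycle v) (hN : 3 ≤ N) (j : Fin N) :
    0 < detz (Dv v j) (Dv v (j+1)) := by
  have h := Dv_pos hconv hN j
  have hsum : v (j+2) - v j = Dv v (j+1) + Dv v j := by
    rw [Dv, Dv]
    have e : j + 1 + 1 = j + 2 := by rw [add_assoc]; congr 1; apply Fin.ext; simp [Fin.val_add]
    rw [e]
    abel
  rw [hsum] at h
  have : detz (Dv v j) (Dv v (j+1) + Dv v j) = detz (Dv v j) (Dv v (j+1)) := by
    simp [detz]; ring
  linarith

lemma detz_swap (u w : ℤ × ℤ) : detz u w = - detz w u := by simp [detz]; ring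

lemma pll_dotp_neg (hconv : IsConvexCycle v) (hN : 3 ≤ N) {j k : Fin N} (hjk : j ≠ k)
    (hpll : detz (Dv v j) (Dv v k) = 0) : dotp (Dv v j) (Dv v k) < 0 := by
  by_cases h1 : k = j + 1
  · exfalso; subst h1; have := adj_det_pos hconv hN j; omega
  by_cases h2 : j = k + 1
  · exfalso
    subst h2
    have := adj_det_pos hconv hN k
    rw [detz_swap] at hpll
    omega
  have hA : 0 < detz (Dv v j) (v k - v j) := hconv j k (Ne.symm hjk) h1
  have hB : 0 < detz (Dv v k) (v j - v k) := hconv k j hjk h2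
  have hsq := Dv_normsq_pos hconv hN j
  have key : detz (Dv v k) (v k - v j) * ((Dv v j).1^2 + (Dv v j).2^2)
      - detz (Dv v j) (v k - v j) * dotp (Dv v j) (Dv v k)
      + detz (Dv v j) (Dv v k) * dotp (Dv v j) (v k - v j) = 0 := by
    simp [detz, dotp]; ring
  have hB' : detz (Dv v k) (v k - v j) = - detz (Dv v k) (v j - v k) := by
    simp [detz]; ring
  by_contra hge
  push_neg at hge
  rw [hpll, zero_mul, add_zero, hB'] at key
  nlinarith [mul_pos hB hsq, mul_nonneg hA.le hge]

lemma no_three (hconv : IsConvexCycle v) (hN : 3 ≤ N) {j k m : Fin N}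
    (hjk : j ≠ k) (hjm : j ≠ m) (hkm : k ≠ m)
    (p1 : detz (Dv v j) (Dv v k) = 0) (p2 : detz (Dv v j) (Dv v m) = 0)
    (p3 : detz (Dv v k) (Dv v m) = 0) : False := by
  have d1 := pll_dotp_neg hconv hN hjk p1
  have d2 := pll_dotp_neg hconv hN hjm p2
  have d3 := pll_dotp_neg hconv hN hkm p3
  have hsq := Dv_normsq_pos hconv hN j
  have key : dotp (Dv v j) (Dv v k) * dotp (Dv v j) (Dv v m)
      - dotp (Dv v k) (Dv v m) * ((Dv v j).1^2 + (Dv v j).2^2)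
      + detz (Dv v j) (Dv v k) * detz (Dv v j) (Dv v m) = 0 := by
    simp [detz, dotp]; ring
  rw [p1, p2, zero_mul, add_zero] at key
  nlinarith [mul_pos_of_neg_of_neg d1 d2, mul_pos_of_neg_of_neg d3 (by linarith : -((Dv v j).1^2 + (Dv v j).2^2) < 0)]

lemma fD_surj (hconv : IsConvexCycle v) (hN : 3 ≤ N) (j : Fin N) :
    Function.Surjective (fD v j) := by
  intro t
  have hsq := Dv_normsq_pos hconv hN j
  have hS : ((Dv v j).1:ℚ)^2 + ((Dv v j).2:ℚ)^2 ≠ 0 := by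
    have : (0:ℚ) < ((Dv v j).1:ℚ)^2 + ((Dv v j).2:ℚ)^2 := by exact_mod_cast hsq
    linarith
  refine ⟨(t * (Dv v j).1 / (((Dv v j).1:ℚ)^2 + ((Dv v j).2:ℚ)^2),
    t * (Dv v j).2 / (((Dv v j).1:ℚ)^2 + ((Dv v j).2:ℚ)^2), 0), ?_⟩
  simp only [fD, LinearMap.coe_mk, AddHom.coe_mk]
  field_simp

lemma finrank_ker_fD (hconv : IsConvexCycle v) (hN : 3 ≤ N) (j : Fin N) :
    Module.finrank ℚ (LinearMap.ker (fD v j)) = 2 := by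
  have h := LinearMap.finrank_range_add_finrank_ker (fD v j)
  rw [LinearMap.range_eq_top.mpr (fD_surj hconv hN j), finrank_top] at h
  simp [Module.finrank_prod] at h
  omega

lemma ker_le_ker_pll {j₁ j₂ : Fin N} (hpll : detz (Dv v j₁) (Dv v j₂) = 0)
    (hconv : IsConvexCycle v) (hN : 3 ≤ N) :
    LinearMap.ker (fD v j₁) ≤ LinearMap.ker (fD v j₂) := by
  intro c hc
  rw [LinearMap.mem_ker] at hc ⊢
  have hc' : c.1 * ((Dv v j₁).1 : ℚ) + c.2.1 * ((Dv v j₁).2 : ℚ) = 0 := hc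
  show c.1 * ((Dv v j₂).1 : ℚ) + c.2.1 * ((Dv v j₂).2 : ℚ) = 0
  have hdet : ((Dv v j₁).1 : ℚ) * ((Dv v j₂).2 : ℚ)
      - ((Dv v j₁).2 : ℚ) * ((Dv v j₂).1 : ℚ) = 0 := by exact_mod_cast hpll
  rcases Dv_cast_ne hconv hN j₁ with h | h
  · have key : ((Dv v j₁).1 : ℚ) * (c.1 * ((Dv v j₂).1 : ℚ) + c.2.1 * ((Dv v j₂).2 : ℚ)) = 0 := by
      linear_combination c.2.1 * hdet + ((Dv v j₂).1 : ℚ) * hc'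
    rcases mul_eq_zero.mp key with h' | h'
    · exact absurd h' h
    · exact h'
  · have key : ((Dv v j₁).2 : ℚ) * (c.1 * ((Dv v j₂).1 : ℚ) + c.2.1 * ((Dv v j₂).2 : ℚ)) = 0 := by
      linear_combination (-c.1) * hdet + ((Dv v j₂).2 : ℚ) * hc'
    rcases mul_eq_zero.mp key with h' | h'
    · exact absurd h' h
    · exact h'

lemma e3_ne_zero : (e3 : ℚ × ℚ × ℚ) ≠ 0 := by
  simp [e3, Prod.ext_iff]

lemma ker_inter_le_span_e3 {j₁ j₂ : Fin N} (hdet : detz (Dv v j₁) (Dv v j₂) ≠ 0)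
    {c : ℚ × ℚ × ℚ} (h1 : c ∈ LinearMap.ker (fD v j₁)) (h2 : c ∈ LinearMap.ker (fD v j₂)) :
    c ∈ Submodule.span ℚ ({e3} : Set (ℚ × ℚ × ℚ)) := by
  rw [LinearMap.mem_ker] at h1 h2
  have e1 : c.1 * ((Dv v j₁).1 : ℚ) + c.2.1 * ((Dv v j₁).2 : ℚ) = 0 := h1
  have e2 : c.1 * ((Dv v j₂).1 : ℚ) + c.2.1 * ((Dv v j₂).2 : ℚ) = 0 := h2
  have hd : ((Dv v j₁).1 : ℚ) * ((Dv v j₂).2 : ℚ)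
      - ((Dv v j₁).2 : ℚ) * ((Dv v j₂).1 : ℚ) ≠ 0 := by
    intro h
    exact hdet (by exact_mod_cast h)
  have hc1 : c.1 = 0 := by
    have key : c.1 * (((Dv v j₁).1 : ℚ) * ((Dv v j₂).2 : ℚ)
        - ((Dv v j₁).2 : ℚ) * ((Dv v j₂).1 : ℚ)) = 0 := by
      linear_combination ((Dv v j₂).2 : ℚ) * e1 - ((Dv v j₁).2 : ℚ) * e2
    rcases mul_eq_zero.mp key with h' | h'
    · exact h'
    · exact absurd h' hd
  have hc2 : c.2.1 = 0 := by
    have key : c.2.1 * (((Dv v j₁).1 : ℚ) * ((Dv v j₂).2 : ℚ)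
        - ((Dv v j₁).2 : ℚ) * ((Dv v j₂).1 : ℚ)) = 0 := by
      linear_combination ((Dv v j₁).1 : ℚ) * e2 - ((Dv v j₂).1 : ℚ) * e1
    rcases mul_eq_zero.mp key with h' | h'
    · exact h'
    · exact absurd h' hd
  rw [Submodule.mem_span_singleton]
  exact ⟨c.2.2, by rw [Prod.ext_iff, Prod.ext_iff]; simp [e3, hc1, hc2]⟩

end StmtAux

open StmtAux

/-- Let `σ ⊆ ℝ³` be the cone over a convex lattice polygon `P` with vertices
`v₁,…,v_N` (`a_j = (v_j,1)`), `Λ = σ^∨ ∩ ℤ³`, and fix an integer `q ≥ 2`.  With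
`K_j := {r ∈ Λ : ⟨a_j,r⟩ < q, ⟨a_{j+1},r⟩ < q}` and `U_j := span_ℚ K_j ⊆ ℚ³`:
(i) `U_j = ℚ³` if `ℓ(j) < q`, while `U_j = {c : ⟨c,a_j⟩ = ⟨c,a_{j+1}⟩}` if `ℓ(j) ≥ q`;
(ii) with `J := {j : ℓ(j) ≥ q}`, the intersection `∩_j U_j` has `ℚ`-dimension `3` if
`J = ∅`; `2` if `J` is a singleton, or a pair `{j₁,j₂}` with `d_{j₁} ∥ d_{j₂}`; and `1`
in all other cases. -/
theorem stmt19 (N : ℕ) [NeZero N] (hN : 3 ≤ N)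
    (v : Fin N → ℤ × ℤ) (hconv : IsConvexCycle v) (q : ℤ) (hq : 2 ≤ q) :
    (∀ j : Fin N,
      (((latlen v j : ℤ) < q → Usub v q j = ⊤) ∧
       (q ≤ (latlen v j : ℤ) →
        ∀ c : ℚ × ℚ × ℚ, c ∈ Usub v q j ↔
          dotQ c (avec v j) = dotQ c (avec v (j + 1))))) ∧
    (({j : Fin N | q ≤ (latlen v j : ℤ)} = ∅ →
        Module.finrank ℚ ↥(⨅ j : Fin N, Usub v q j) = 3) ∧
     (((∃ j₀ : Fin N, {j : Fin N | q ≤ (latlen v j : ℤ)} = {j₀}) ∨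
       (∃ j₁ j₂ : Fin N, j₁ ≠ j₂ ∧ {j : Fin N | q ≤ (latlen v j : ℤ)} = {j₁, j₂} ∧
         detz (v (j₁ + 1) - v j₁) (v (j₂ + 1) - v j₂) = 0)) →
        Module.finrank ℚ ↥(⨅ j : Fin N, Usub v q j) = 2) ∧
     (({j : Fin N | q ≤ (latlen v j : ℤ)} ≠ ∅ ∧
       ¬((∃ j₀ : Fin N, {j : Fin N | q ≤ (latlen v j : ℤ)} = {j₀}) ∨
         (∃ j₁ j₂ : Fin N, j₁ ≠ j₂ ∧ {j : Fin N | q ≤ (latlen v j : ℤ)} = {j₁, j₂} ∧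
           detz (v (j₁ + 1) - v j₁) (v (j₂ + 1) - v j₂) = 0))) →
        Module.finrank ℚ ↥(⨅ j : Fin N, Usub v q j) = 1)) := by
  constructor
  · intro j
    exact ⟨fun hlt => Usub_eq_top hconv hN hq hlt,
           fun hge c => Usub_mem_iff hconv hN hq hge c⟩
  refine ⟨?_, ?_, ?_⟩
  · -- empty case
    intro hS
    have hall : (⨅ j : Fin N, Usub v q j) = ⊤ := by
      rw [iInf_eq_top]
      intro j
      have hj : j ∉ ({j : Fin N | q ≤ (latlen v j : ℤ)}) := by
        rw [hS]; exact Set.notMem_empty j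
      exact Usub_eq_top hconv hN hq (lt_of_not_ge hj)
    rw [hall, finrank_top]
    simp [Module.finrank_prod]
  · -- singleton or parallel pair
    rintro (⟨j₀, hS⟩ | ⟨j₁, j₂, hne, hS, hdet⟩)
    · have hj₀ : q ≤ (latlen v j₀ : ℤ) := by
        have : j₀ ∈ {j : Fin N | q ≤ (latlen v j : ℤ)} := by
          rw [hS]; exact Set.mem_singleton j₀
        exact this
      have hV : (⨅ j : Fin N, Usub v q j) = LinearMap.ker (fD v j₀) := by
        apply le_antisymm
        · exact le_trans (iInf_le _ j₀) (le_of_eq (Usub_eq_ker hconv hN hq hj₀))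
        · refine le_iInf fun j => ?_
          by_cases hj : q ≤ (latlen v j : ℤ)
          · have hmem : j ∈ {j : Fin N | q ≤ (latlen v j : ℤ)} := hj
            rw [hS, Set.mem_singleton_iff] at hmem
            subst hmem
            exact le_of_eq (Usub_eq_ker hconv hN hq hj₀).symm
          · rw [Usub_eq_top hconv hN hq (lt_of_not_ge hj)]; exact le_top
      rw [hV]
      exact finrank_ker_fD hconv hN j₀
    · have hdet' : detz (Dv v j₁) (Dv v j₂) = 0 := hdet
      have hj₁ : q ≤ (latlen v j₁ : ℤ) := by
        have : j₁ ∈ {j : Fin N | q ≤ (latlen v j : ℤ)} := by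
          rw [hS]; exact Set.mem_insert j₁ _
        exact this
      have hj₂ : q ≤ (latlen v j₂ : ℤ) := by
        have : j₂ ∈ {j : Fin N | q ≤ (latlen v j : ℤ)} := by
          rw [hS]; exact Set.mem_insert_iff.mpr (Or.inr rfl)
        exact this
      have hV : (⨅ j : Fin N, Usub v q j) = LinearMap.ker (fD v j₁) := by
        apply le_antisymm
        · exact le_trans (iInf_le _ j₁) (le_of_eq (Usub_eq_ker hconv hN hq hj₁))
        · refine le_iInf fun j => ?_
          by_cases hj : q ≤ (latlen v j : ℤ)
          · have hmem : j ∈ {j : Fin N | q ≤ (latlen v j : ℤ)} := hj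
            rw [hS, Set.mem_insert_iff, Set.mem_singleton_iff] at hmem
            rcases hmem with rfl | rfl
            · exact le_of_eq (Usub_eq_ker hconv hN hq hj₁).symm
            · rw [Usub_eq_ker hconv hN hq hj₂]
              exact ker_le_ker_pll hdet' hconv hN
          · rw [Usub_eq_top hconv hN hq (lt_of_not_ge hj)]; exact le_top
      rw [hV]
      exact finrank_ker_fD hconv hN j₁
  · -- remaining case
    rintro ⟨hne, hnot⟩
    obtain ⟨j₁, hj₁⟩ : ∃ j, j ∈ {j : Fin N | q ≤ (latlen v j : ℤ)} :=
      Set.nonempty_iff_ne_empty.mpr hne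
    obtain ⟨j₂, hj₂S, hj₂ne⟩ : ∃ j₂ ∈ {j : Fin N | q ≤ (latlen v j : ℤ)}, j₂ ≠ j₁ := by
      by_contra h
      push_neg at h
      exact hnot (Or.inl ⟨j₁, Set.eq_singleton_iff_unique_mem.mpr ⟨hj₁, fun x hx => h x hx⟩⟩)
    obtain ⟨k₁, k₂, hk₁, hk₂, hdet⟩ : ∃ k₁ k₂ : Fin N,
        q ≤ (latlen v k₁ : ℤ) ∧ q ≤ (latlen v k₂ : ℤ) ∧ detz (Dv v k₁) (Dv v k₂) ≠ 0 := by
      by_cases hd12 : detz (Dv v j₂) (Dv v j₁) = 0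
      · have hSne : {j : Fin N | q ≤ (latlen v j : ℤ)} ≠ {j₂, j₁} := fun h =>
          hnot (Or.inr ⟨j₂, j₁, hj₂ne, h, hd12⟩)
        obtain ⟨j₃, hj₃S, hj₃⟩ : ∃ j₃ ∈ {j : Fin N | q ≤ (latlen v j : ℤ)},
            j₃ ∉ ({j₂, j₁} : Set (Fin N)) := by
          by_contra h
          push_neg at h
          refine hSne (Set.Subset.antisymm h ?_)
          intro x hx
          rcases hx with rfl | hx
          · exact hj₂S
          · rw [Set.mem_singleton_iff] at hx; subst hx; exact hj₁
        rw [Set.mem_insert_iff, Set.mem_singleton_iff] at hj₃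
        push_neg at hj₃
        obtain ⟨h32, h31⟩ := hj₃
        by_cases h13 : detz (Dv v j₁) (Dv v j₃) = 0
        · by_cases h23 : detz (Dv v j₂) (Dv v j₃) = 0
          · exact (no_three hconv hN hj₂ne (Ne.symm h32) (Ne.symm h31) hd12 h23 h13).elim
          · exact ⟨j₂, j₃, hj₂S, hj₃S, h23⟩
        · exact ⟨j₁, j₃, hj₁, hj₃S, h13⟩
      · exact ⟨j₂, j₁, hj₂S, hj₁, hd12⟩
    have hV : (⨅ j : Fin N, Usub v q j) = Submodule.span ℚ ({e3} : Set (ℚ × ℚ × ℚ)) := by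
      apply le_antisymm
      · intro c hc
        rw [Submodule.mem_iInf] at hc
        have h1 := hc k₁
        have h2 := hc k₂
        rw [Usub_eq_ker hconv hN hq hk₁] at h1
        rw [Usub_eq_ker hconv hN hq hk₂] at h2
        exact ker_inter_le_span_e3 hdet h1 h2
      · rw [Submodule.span_singleton_le_iff_mem, Submodule.mem_iInf]
        exact fun j => e3_mem_Usub hq j
    rw [hV]
    exact finrank_span_singleton e3_ne_zero


end Polygon
end
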